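/- Let τ be the F₂-algebra automorphism of MvPolynomial (Fin 2) (ZMod 2) exchanging the two variables u and v, let N = id + τ as an F₂-linear endomorphism, and let W be the range of the F₂-linear map Polynomial (ZMod 2) → MvPolynomial (Fin 2) (ZMod 2) given by R ↦ R(u·v). Then the submodule of τ-invariant (symmetric) polynomials is the internal direct sum of LinearMap.range N and W: every symmetric polynomial p can be written p = Q + τ(Q) + R(u·v) for some polynomials Q and R, and LinearMap.range N ∩ W = 0. (This is the exactness of the beginning of the injective resolution F₂[w₁,w₂] ↪ F₂[u,v] →^{1+τ} F₂[u,v] → … of the invariant ring F₂[u,v]^{Z/2} used in the paper to show ℓ¹(m(B₂)) = 0.) -/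
import Mathlib

open MvPolynomial

/-- The automorphism `τ` of `F₂[u,v]` exchanging the two variables. -/
noncomputable def tauSwap :
    MvPolynomial (Fin 2) (ZMod 2) ≃ₐ[ZMod 2] MvPolynomial (Fin 2) (ZMod 2) :=
  MvPolynomial.renameEquiv (ZMod 2) (Equiv.swap (0 : Fin 2) 1)

/-- The norm map `N = id + τ` as an `F₂`-linear endomorphism. -/
noncomputable def normN :
    MvPolynomial (Fin 2) (ZMod 2) →ₗ[ZMod 2] MvPolynomial (Fin 2) (ZMod 2) :=
  LinearMap.id + tauSwap.toLinearMap

/-- `W`: the image of `F₂[t] → F₂[u,v]`, `R ↦ R(uv)`. -/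
noncomputable def polysInUV :
    Submodule (ZMod 2) (MvPolynomial (Fin 2) (ZMod 2)) :=
  LinearMap.range
    (Polynomial.aeval (X 0 * X 1 : MvPolynomial (Fin 2) (ZMod 2))).toLinearMap

namespace SymAux

/-- swap action on exponent vectors -/
noncomputable def sw (d : Fin 2 →₀ ℕ) : Fin 2 →₀ ℕ :=
  Finsupp.mapDomain (Equiv.swap (0 : Fin 2) 1) d

lemma sw_apply0 (d : Fin 2 →₀ ℕ) : sw d 0 = d 1 := by
  have := Finsupp.mapDomain_apply (Equiv.swap (0 : Fin 2) 1).injective d 1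
  simpa [sw] using this

lemma sw_apply1 (d : Fin 2 →₀ ℕ) : sw d 1 = d 0 := by
  have := Finsupp.mapDomain_apply (Equiv.swap (0 : Fin 2) 1).injective d 0
  simpa [sw] using this

lemma sw_sw (d : Fin 2 →₀ ℕ) : sw (sw d) = d := by
  ext a
  fin_cases a <;> simp [sw_apply0, sw_apply1]

lemma sw_eq_self {d : Fin 2 →₀ ℕ} (h : d 0 = d 1) : sw d = d := by
  ext a
  fin_cases a <;> simp [sw_apply0, sw_apply1, h]

lemma coeff_tau (p : MvPolynomial (Fin 2) (ZMod 2)) (d : Fin 2 →₀ ℕ) :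
    coeff d (tauSwap p) = coeff (sw d) p := by
  have h := coeff_rename_mapDomain (Equiv.swap (0 : Fin 2) 1)
    (Equiv.swap (0 : Fin 2) 1).injective p (sw d)
  have h2 : Finsupp.mapDomain (⇑(Equiv.swap (0 : Fin 2) 1)) (sw d) = d := sw_sw d
  rw [h2] at h
  simpa [tauSwap] using h

lemma add_self (p : MvPolynomial (Fin 2) (ZMod 2)) : p + p = 0 := by
  have : (2 : ZMod 2) • p = p + p := two_smul _ p
  rw [show (2 : ZMod 2) = 0 by decide, zero_smul] at this
  exact this.symm

lemma coeff_normN (q : MvPolynomial (Fin 2) (ZMod 2)) (d : Fin 2 →₀ ℕ) :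
    coeff d (normN q) = coeff d q + coeff (sw d) q := by
  simp [normN, coeff_tau, coeff_add]

/-- part of a polynomial selected by a predicate on exponents -/
noncomputable def selPart (P : (Fin 2 →₀ ℕ) → Prop) [DecidablePred P]
    (p : MvPolynomial (Fin 2) (ZMod 2)) : MvPolynomial (Fin 2) (ZMod 2) :=
  ∑ d ∈ p.support.filter P, monomial d (coeff d p)

lemma coeff_selPart (P : (Fin 2 →₀ ℕ) → Prop) [DecidablePred P]
    (p : MvPolynomial (Fin 2) (ZMod 2)) (d : Fin 2 →₀ ℕ) :
    coeff d (selPart P p) = if P d then coeff d p else 0 := by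
  rw [selPart, coeff_sum]
  rw [Finset.sum_congr rfl (fun e _ => coeff_monomial d e (coeff e p))]
  rw [Finset.sum_ite_eq' (p.support.filter P) d (fun e => coeff e p)]
  by_cases hd : P d
  · by_cases hs : d ∈ p.support
    · simp [hd, hs]
    · simp [hd, hs, MvPolynomial.notMem_support_iff.mp hs]
  · simp [hd]

lemma fin2_decomp (d : Fin 2 →₀ ℕ) :
    Finsupp.single (0 : Fin 2) (d 0) + Finsupp.single 1 (d 1) = d := by
  ext a
  fin_cases a <;> simp

lemma monomial_eq_aeval (k : ℕ) (c : ZMod 2) :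
    (monomial (Finsupp.single (0 : Fin 2) k + Finsupp.single 1 k) c :
      MvPolynomial (Fin 2) (ZMod 2)) =
    C c * (X 0 * X 1) ^ k := by
  rw [mul_pow, X_pow_eq_monomial, X_pow_eq_monomial, monomial_mul, C_mul_monomial]
  simp

lemma coeff_aeval_offdiag (R : Polynomial (ZMod 2)) {d : Fin 2 →₀ ℕ} (h : d 0 ≠ d 1) :
    coeff d (Polynomial.aeval (X 0 * X 1 : MvPolynomial (Fin 2) (ZMod 2)) R) = 0 := by
  induction R using Polynomial.induction_on' with
  | add p q hp hq => simp [hp, hq]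
  | monomial n a =>
    rw [Polynomial.aeval_monomial, show (algebraMap (ZMod 2) (MvPolynomial (Fin 2) (ZMod 2))) a = C a from rfl,
      ← SymAux.monomial_eq_aeval, coeff_monomial]
    rw [if_neg]
    intro he
    apply h
    rw [← he]
    simp

lemma mem_ker_iff (p : MvPolynomial (Fin 2) (ZMod 2)) :
    p ∈ LinearMap.ker normN ↔ tauSwap p = p := by
  have hn : normN p = p + tauSwap p := rfl
  rw [LinearMap.mem_ker, hn]
  constructor
  · intro h
    have h2 : p + (p + tauSwap p) = p := by rw [h, add_zero]
    rwa [← add_assoc, add_self, zero_add] at h2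
  · intro h
    rw [h]
    exact add_self p

lemma diag_mem_W (p : MvPolynomial (Fin 2) (ZMod 2)) :
    selPart (fun d => d 0 = d 1) p ∈ polysInUV := by
  refine ⟨∑ d ∈ p.support.filter (fun d => d 0 = d 1),
      Polynomial.C (coeff d p) * Polynomial.X ^ (d 0), ?_⟩
  rw [AlgHom.toLinearMap_apply, map_sum, selPart]
  refine Finset.sum_congr rfl (fun d hd => ?_)
  have hdd : d 0 = d 1 := (Finset.mem_filter.mp hd).2
  rw [map_mul, map_pow, Polynomial.aeval_X, Polynomial.aeval_C,
    show (algebraMap (ZMod 2) (MvPolynomial (Fin 2) (ZMod 2))) (coeff d p) = C (coeff d p) from rfl,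
    ← monomial_eq_aeval]
  rw [show Finsupp.single (1 : Fin 2) (d 0) = Finsupp.single 1 (d 1) by rw [hdd],
    fin2_decomp d]

end SymAux

open SymAux in
theorem symmetric_polynomials_direct_sum :
    LinearMap.ker normN = LinearMap.range normN ⊔ polysInUV ∧
      LinearMap.range normN ⊓ polysInUV = ⊥ := by
  constructor
  · apply le_antisymm
    · intro p hp
      have htau := (mem_ker_iff p).mp hp
      have hsym : ∀ d, coeff (sw d) p = coeff d p := by
        intro d
        conv_rhs => rw [← htau, coeff_tau]
      refine Submodule.mem_sup.mpr ⟨normN (selPart (fun d => d 0 < d 1) p),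
        LinearMap.mem_range_self _ _, selPart (fun d => d 0 = d 1) p, diag_mem_W p, ?_⟩
      apply MvPolynomial.ext
      intro d
      rw [coeff_add, coeff_normN, coeff_selPart, coeff_selPart, coeff_selPart,
        sw_apply0, sw_apply1]
      rcases lt_trichotomy (d 0) (d 1) with h | h | h
      · rw [if_pos h, if_neg (not_lt_of_gt h), if_neg h.ne, add_zero, add_zero]
      · rw [if_neg (by rw [h]; exact lt_irrefl _), if_neg (by rw [h]; exact lt_irrefl _),
          if_pos h, zero_add, zero_add]
      · rw [if_neg (not_lt_of_gt h), if_pos h, if_neg (Ne.symm h.ne), hsym, zero_add, add_zero]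
    · apply sup_le
      · rintro _ ⟨q, rfl⟩
        rw [mem_ker_iff]
        apply MvPolynomial.ext
        intro d
        rw [coeff_tau, coeff_normN, coeff_normN, sw_sw, add_comm]
      · rintro _ ⟨R, rfl⟩
        rw [mem_ker_iff, AlgHom.toLinearMap_apply]
        have h1 : tauSwap (X 0 * X 1 : MvPolynomial (Fin 2) (ZMod 2)) = X 0 * X 1 := by
          simp [tauSwap, mul_comm]
        calc tauSwap (Polynomial.aeval (X 0 * X 1 : MvPolynomial (Fin 2) (ZMod 2)) R)
            = Polynomial.aeval (tauSwap (X 0 * X 1 : MvPolynomial (Fin 2) (ZMod 2))) R :=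
              (Polynomial.aeval_algHom_apply tauSwap.toAlgHom _ R).symm
          _ = _ := by rw [h1]
  · rw [eq_bot_iff]
    rintro p ⟨⟨q, hq⟩, ⟨R, hR⟩⟩
    rw [Submodule.mem_bot]
    apply MvPolynomial.ext
    intro d
    rw [coeff_zero]
    by_cases h : d 0 = d 1
    · rw [← hq, coeff_normN, sw_eq_self h]
      exact CharTwo.add_self_eq_zero _
    · rw [← hR, AlgHom.toLinearMap_apply]
      exact coeff_aeval_offdiag R h
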